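/- Let M be a connected m-dimensional CW complex with a fixed-point free cellular involution τ, and let q : M → M/τ be the quotient double covering. If secat(q) = m, then the ℤ/2-index of (M,τ) equals m − 1; that is, ((M,τ); ℝⁿ) satisfies the Borsuk–Ulam property for every n < m, but ((M,τ); ℝ^m) does not. -/

import Mathlib

open Metric Set

/-- A continuous local section of `p` over `U`. -/
def IsLocalSection {E B : Type*} [TopologicalSpace E] [TopologicalSpace B]
    (p : E → B) (U : Set B) : Prop :=
  ∃ s : U → E, Continuous s ∧ ∀ x : U, p (s x) = (x : B)

/-- The sectional category of a map `p : E → B`: the least number of open sets covering `B`,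
over each of which `p` admits a continuous local section; `⊤` if no finite cover exists. -/
noncomputable def secat {E B : Type*} [TopologicalSpace E] [TopologicalSpace B]
    (p : E → B) : ℕ∞ :=
  sInf {n : ℕ∞ | ∃ k : ℕ, n = (k : ℕ∞) ∧ ∃ U : Fin k → Set B,
    (∀ i, IsOpen (U i)) ∧ (⋃ i, U i) = Set.univ ∧ ∀ i, IsLocalSection p (U i)}

/-- A subset is contractible within the ambient space if its inclusion is nullhomotopic. -/
def ContractibleIn {X : Type*} [TopologicalSpace X] (U : Set X) : Prop :=
  ContinuousMap.Nullhomotopic (⟨(Subtype.val : U → X), continuous_subtype_val⟩ : C(U, X))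

/-- Lusternik–Schnirelmann category: least number of open sets covering `X`, each
contractible within `X`. -/
noncomputable def LScat (X : Type*) [TopologicalSpace X] : ℕ∞ :=
  sInf {n : ℕ∞ | ∃ k : ℕ, n = (k : ℕ∞) ∧ ∃ U : Fin k → Set X,
    (∀ i, IsOpen (U i)) ∧ (⋃ i, U i) = Set.univ ∧ ∀ i, ContractibleIn (U i)}

/-- Hurewicz fibration: the homotopy lifting property with respect to all spaces. -/
def IsHurewiczFibration {E B : Type*} [TopologicalSpace E] [TopologicalSpace B]
    (p : E → B) : Prop :=
  ∀ (Z : Type*) [TopologicalSpace Z] (H : Z × unitInterval → B) (h : Z → E),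
    Continuous H → Continuous h → (∀ z, p (h z) = H (z, 0)) →
    ∃ G : Z × unitInterval → E, Continuous G ∧ (∀ z, G (z, 0) = h z) ∧ ∀ w, p (G w) = H w

/-- The orbit relation of the action generated by a map `τ`. -/
def orbitRelOf {X : Type*} (τ : X → X) : X → X → Prop := fun x y => y = τ x

/-- Quotient of `X` by the (involutive) map `τ`, with the quotient topology. -/
abbrev InvolQuot {X : Type*} [TopologicalSpace X] (τ : X → X) : Type _ := Quot (orbitRelOf τ)

/-- The quotient map `X → X/τ`. -/
def involQuotMk {X : Type*} [TopologicalSpace X] (τ : X → X) : X → InvolQuot τ :=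
  Quot.mk (orbitRelOf τ)

/-- The ordered configuration space `F(Y,2)` of two distinct points of `Y`. -/
abbrev Conf2 (Y : Type*) [TopologicalSpace Y] : Type _ := {p : Y × Y // p.1 ≠ p.2}

/-- The swap involution `τ₂` on `F(Y,2)`. -/
def confSwap {Y : Type*} [TopologicalSpace Y] : Conf2 Y → Conf2 Y :=
  fun p => ⟨(p.1.2, p.1.1), Ne.symm p.2⟩

/-- The unordered configuration space `D(Y,2) = F(Y,2)/τ₂`. -/
abbrev UConf2 (Y : Type*) [TopologicalSpace Y] : Type _ := InvolQuot (confSwap (Y := Y))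

/-- The quotient double covering `q^Y : F(Y,2) → D(Y,2)`. -/
def confQuotMk (Y : Type*) [TopologicalSpace Y] : Conf2 Y → UConf2 Y :=
  involQuotMk confSwap

/-- The Borsuk–Ulam property for the triple `((X,τ);Y)`. -/
def BorsukUlamProperty (X : Type*) [TopologicalSpace X] (τ : X → X)
    (Y : Type*) [TopologicalSpace Y] : Prop :=
  ∀ f : X → Y, Continuous f → ∃ x : X, f (τ x) = f x

/-- The `m`-sphere as the unit sphere of `ℝ^{m+1}`. -/
abbrev Sph (m : ℕ) : Type := Metric.sphere (0 : EuclideanSpace ℝ (Fin (m + 1))) 1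

/-- The antipodal involution on the sphere. -/
noncomputable def antipodal (m : ℕ) : Sph m → Sph m := fun x => -x

/-- The smallest dimension of a Euclidean space into which `Y` embeds. -/
noncomputable def embDim (Y : Type*) [TopologicalSpace Y] : ℕ∞ :=
  sInf {n : ℕ∞ | ∃ k : ℕ, n = (k : ℕ∞) ∧
    ∃ e : Y → EuclideanSpace ℝ (Fin k), Topology.IsEmbedding e}

/-- The `ℤ/2`-index of `(X,τ)`: the least `n` such that there is a continuous map
`X → Sⁿ` which is equivariant for `τ` and the antipodal involution. -/
noncomputable def z2Index {X : Type*} [TopologicalSpace X] (τ : X → X) : ℕ∞ :=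
  sInf {n : ℕ∞ | ∃ k : ℕ, n = (k : ℕ∞) ∧
    ∃ g : X → Sph k, Continuous g ∧ ∀ x, g (τ x) = antipodal k (g x)}

section CW

/-- A (classical) CW-complex structure on a Hausdorff space `X`: a family of cells
with characteristic maps from closed disks, the images of the open disks partitioning `X`,
each attaching map sending the boundary sphere into cells of lower dimension, together with
closure finiteness (C) and the weak topology (W). -/
structure CWStructure (X : Type u) [TopologicalSpace X] : Type (u + 1) where
  /-- index type of the `n`-cells -/
  cell : ℕ → Type u
  /-- characteristic map of each `n`-cell -/
  map : (n : ℕ) → cell n → EuclideanSpace ℝ (Fin n) → X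
  continuousOn : ∀ n i, ContinuousOn (map n i) (closedBall 0 1)
  injOn : ∀ n i, Set.InjOn (map n i) (ball 0 1)
  partition : ∀ x : X, ∃! p : Σ n, cell n, x ∈ map p.1 p.2 '' ball 0 1
  mapsTo_boundary : ∀ n i, Set.MapsTo (map n i) (sphere 0 1)
    (⋃ (m : ℕ) (_ : m < n) (j : cell m), map m j '' closedBall 0 1)
  closureFinite : ∀ n i, {p : Σ m, cell m |
    (map p.1 p.2 '' ball 0 1 ∩ map n i '' closedBall 0 1).Nonempty}.Finite
  weakTopology : ∀ A : Set X,
    (∀ n i, IsClosed (A ∩ map n i '' closedBall 0 1)) → IsClosed A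

namespace CWStructure

variable {X : Type u} [TopologicalSpace X] (S : CWStructure X)

/-- The `n`-skeleton of a CW structure. -/
def skeleton (n : ℕ) : Set X :=
  ⋃ (m : ℕ) (_ : m ≤ n) (j : S.cell m), S.map m j '' closedBall 0 1

/-- The CW structure has dimension at most `d`. -/
def DimLE (d : ℕ) : Prop := ∀ n, d < n → IsEmpty (S.cell n)

/-- The CW structure has dimension exactly `d`. -/
def DimEq (d : ℕ) : Prop := S.DimLE d ∧ Nonempty (S.cell d)

/-- A self-map is cellular if it maps each skeleton into itself. -/
def Cellular (f : X → X) : Prop := ∀ n, Set.MapsTo f (S.skeleton n) (S.skeleton n)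

end CWStructure

/-- The homotopical dimension of `X` is at most `d`: `X` is homotopy equivalent to a
CW complex of dimension at most `d`. -/
def HDimLE (X : Type u) [TopologicalSpace X] (d : ℕ) : Prop :=
  ∃ (Z : Type u) (_ : TopologicalSpace Z) (S : CWStructure Z),
    S.DimLE d ∧ Nonempty (ContinuousMap.HomotopyEquiv Z X)

end CW

/-! ### Auxiliary lemmas -/

section AuxENat

lemma enat_sInf_mem {S : Set ℕ∞} {n : ℕ} (h : sInf S = (n : ℕ∞)) : (n : ℕ∞) ∈ S := by
  have hne : S.Nonempty := by
    by_contra hS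
    rw [Set.not_nonempty_iff_eq_empty] at hS
    rw [hS, sInf_empty] at h
    exact (ENat.top_ne_coe n) h
  have := csInf_mem hne
  rwa [h] at this

end AuxENat

section AuxQuot

variable {X : Type*} [TopologicalSpace X] {τ : X → X}

lemma involQuotMk_tau (x : X) : involQuotMk τ (τ x) = involQuotMk τ x :=
  (Quot.sound (show orbitRelOf τ x (τ x) from rfl)).symm

lemma involQuot_mk_eq_iff (hτ : Function.Involutive τ) {x y : X} :
    involQuotMk τ x = involQuotMk τ y ↔ y = x ∨ y = τ x := by
  constructor
  · intro hxy
    have hgen := Quot.eq.1 hxy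
    clear hxy
    induction hgen with
    | rel a b hab => exact Or.inr hab
    | refl a => exact Or.inl rfl
    | symm a b _ ih =>
      rcases ih with h | h
      · exact Or.inl h.symm
      · exact Or.inr (by rw [h, hτ a])
    | trans a b c _ _ ih₁ ih₂ =>
      rcases ih₁ with h1 | h1 <;> rcases ih₂ with h2 | h2
      · exact Or.inl (h2.trans h1)
      · exact Or.inr (by rw [h2, h1])
      · exact Or.inr (by rw [h2, h1])
      · exact Or.inl (by rw [h2, h1, hτ a])
  · rintro (rfl | rfl)
    · rfl
    · exact (involQuotMk_tau x).symm

lemma preimage_image_involQuotMk (hτ : Function.Involutive τ) (C : Set X) :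
    involQuotMk τ ⁻¹' (involQuotMk τ '' C) = C ∪ τ ⁻¹' C := by
  ext x
  simp only [Set.mem_preimage, Set.mem_image, Set.mem_union]
  constructor
  · rintro ⟨y, hy, hxy⟩
    rcases (involQuot_mk_eq_iff hτ).1 hxy with rfl | hx
    · exact Or.inl hy
    · right
      rw [hx, hτ y]
      exact hy
  · rintro (hx | hx)
    · exact ⟨x, hx, rfl⟩
    · exact ⟨τ x, hx, involQuotMk_tau x⟩

lemma isOpenMap_involQuotMk (hτc : Continuous τ) (hτ : Function.Involutive τ) :
    IsOpenMap (involQuotMk τ) := by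
  intro U hU
  rw [← isQuotientMap_quot_mk.isOpen_preimage]
  rw [show Quot.mk (orbitRelOf τ) ⁻¹' (involQuotMk τ '' U)
        = involQuotMk τ ⁻¹' (involQuotMk τ '' U) from rfl,
      preimage_image_involQuotMk hτ U]
  exact hU.union (hU.preimage hτc)

lemma isClosedMap_involQuotMk (hτc : Continuous τ) (hτ : Function.Involutive τ) :
    IsClosedMap (involQuotMk τ) := by
  intro C hC
  rw [← isQuotientMap_quot_mk.isClosed_preimage]
  rw [show Quot.mk (orbitRelOf τ) ⁻¹' (involQuotMk τ '' C)
        = involQuotMk τ ⁻¹' (involQuotMk τ '' C) from rfl,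
      preimage_image_involQuotMk hτ C]
  exact hC.union (hC.preimage hτc)

lemma normalSpace_involQuot [NormalSpace X] (hτc : Continuous τ)
    (hτ : Function.Involutive τ) : NormalSpace (InvolQuot τ) := by
  refine ⟨fun s t hs ht hst => ?_⟩
  obtain ⟨U, V, hU, hV, hsU, htV, hUV⟩ :=
    NormalSpace.normal (involQuotMk τ ⁻¹' s) (involQuotMk τ ⁻¹' t)
      (hs.preimage continuous_quot_mk) (ht.preimage continuous_quot_mk)
      (hst.preimage _)
  refine ⟨(involQuotMk τ '' Uᶜ)ᶜ, (involQuotMk τ '' Vᶜ)ᶜ,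
    (isClosedMap_involQuotMk hτc hτ _ hU.isClosed_compl).isOpen_compl,
    (isClosedMap_involQuotMk hτc hτ _ hV.isClosed_compl).isOpen_compl, ?_, ?_, ?_⟩
  · intro u hu
    rintro ⟨x, hxU, rfl⟩
    exact hxU (hsU (by exact hu))
  · intro u hu
    rintro ⟨x, hxV, rfl⟩
    exact hxV (htV (by exact hu))
  · rw [Set.disjoint_left]
    intro u hu hu'
    obtain ⟨x, rfl⟩ := Quot.exists_rep u
    have hxU : x ∈ U := by
      by_contra hx
      exact hu ⟨x, hx, rfl⟩
    have hxV : x ∈ V := by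
      by_contra hx
      exact hu' ⟨x, hx, rfl⟩
    exact Set.disjoint_left.1 hUV hxU hxV

end AuxQuot

section AuxGlue

lemma continuousOn_union_of_isClosed {α β : Type*} [TopologicalSpace α] [TopologicalSpace β]
    {f : α → β} {s t : Set α} (hs : IsClosed s) (ht : IsClosed t)
    (hfs : ContinuousOn f s) (hft : ContinuousOn f t) : ContinuousOn f (s ∪ t) := by
  intro x hx
  have h1 : ContinuousWithinAt f s x := by
    by_cases hxs : x ∈ s
    · exact hfs x hxs
    · exact continuousWithinAt_of_notMem_closure (by rwa [hs.closure_eq])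
  have h2 : ContinuousWithinAt f t x := by
    by_cases hxt : x ∈ t
    · exact hft x hxt
    · exact continuousWithinAt_of_notMem_closure (by rwa [ht.closure_eq])
  exact h1.union h2

end AuxGlue

section AuxCW

universe u

namespace CWStructure

variable {X : Type u} [TopologicalSpace X] [T2Space X] (S : CWStructure X)

/-- The closed cell. -/
def cc (n : ℕ) (i : S.cell n) : Set X := S.map n i '' closedBall 0 1

/-- The open cell. -/
def oc (n : ℕ) (i : S.cell n) : Set X := S.map n i '' ball 0 1

/-- Image of the boundary sphere. -/
def msph (n : ℕ) (i : S.cell n) : Set X := S.map n i '' sphere 0 1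

/-- Union of open cells of dimension at most `N`. -/
def uoc (N : ℕ) : Set X := ⋃ (p : Σ n, S.cell n) (_ : p.1 ≤ N), S.oc p.1 p.2

lemma isCompact_cc (n : ℕ) (i : S.cell n) : IsCompact (S.cc n i) :=
  (isCompact_closedBall _ _).image_of_continuousOn (S.continuousOn n i)

lemma isClosed_cc (n : ℕ) (i : S.cell n) : IsClosed (S.cc n i) :=
  (S.isCompact_cc n i).isClosed

lemma isCompact_msph (n : ℕ) (i : S.cell n) : IsCompact (S.msph n i) :=
  (isCompact_sphere _ _).image_of_continuousOn
    ((S.continuousOn n i).mono sphere_subset_closedBall)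

lemma isClosed_msph (n : ℕ) (i : S.cell n) : IsClosed (S.msph n i) :=
  (S.isCompact_msph n i).isClosed

lemma oc_subset_cc (n : ℕ) (i : S.cell n) : S.oc n i ⊆ S.cc n i :=
  Set.image_mono ball_subset_closedBall

lemma msph_subset_cc (n : ℕ) (i : S.cell n) : S.msph n i ⊆ S.cc n i :=
  Set.image_mono sphere_subset_closedBall

lemma cc_eq_oc_union_msph (n : ℕ) (i : S.cell n) :
    S.cc n i = S.oc n i ∪ S.msph n i := by
  unfold cc oc msph
  rw [← Set.image_union, ball_union_sphere]

lemma msph_subset_below (n : ℕ) (i : S.cell n) :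
    S.msph n i ⊆ ⋃ (m : ℕ) (_ : m < n) (j : S.cell m), S.cc m j := by
  rintro x ⟨y, hy, rfl⟩
  exact S.mapsTo_boundary n i hy

lemma mem_uoc_iff {N : ℕ} {x : X} :
    x ∈ S.uoc N ↔ ∃ p : Σ n, S.cell n, p.1 ≤ N ∧ x ∈ S.oc p.1 p.2 := by
  simp only [uoc, Set.mem_iUnion]
  tauto

lemma uoc_mono {N N' : ℕ} (h : N ≤ N') : S.uoc N ⊆ S.uoc N' := by
  intro x hx
  rw [mem_uoc_iff] at hx ⊢
  obtain ⟨p, hp, hxp⟩ := hx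
  exact ⟨p, hp.trans h, hxp⟩

lemma cell_eq_of_mem_oc {n k : ℕ} {i : S.cell n} {j : S.cell k} {x : X}
    (h1 : x ∈ S.oc n i) (h2 : x ∈ S.oc k j) :
    (⟨n, i⟩ : Σ n, S.cell n) = ⟨k, j⟩ := by
  obtain ⟨p, _, hu⟩ := S.partition x
  exact (hu ⟨n, i⟩ h1).trans (hu ⟨k, j⟩ h2).symm

lemma eq_cell_point {n : ℕ} {i i' : S.cell n} {y y' : EuclideanSpace ℝ (Fin n)}
    (hy : y ∈ ball (0 : EuclideanSpace ℝ (Fin n)) 1) (hy' : y' ∈ ball 0 1)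
    (h : S.map n i y = S.map n i' y') : i = i' ∧ y = y' := by
  have hs : (⟨n, i⟩ : Σ k, S.cell k) = ⟨n, i'⟩ :=
    S.cell_eq_of_mem_oc ⟨y, hy, rfl⟩ ⟨y', hy', h.symm⟩
  have hi : i = i' := eq_of_heq (Sigma.mk.inj_iff.mp hs).2
  subst hi
  exact ⟨rfl, S.injOn n i hy hy' h⟩

lemma cc_subset_uoc : ∀ n (i : S.cell n), S.cc n i ⊆ S.uoc n := by
  intro n
  induction n using Nat.strong_induction_on with
  | _ n IH =>
    intro i x hx
    rw [S.cc_eq_oc_union_msph] at hx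
    rcases hx with hx | hx
    · exact (S.mem_uoc_iff).2 ⟨⟨n, i⟩, le_rfl, hx⟩
    · have hx' := S.msph_subset_below n i hx
      simp only [Set.mem_iUnion] at hx'
      obtain ⟨m, hm, j, hxm⟩ := hx'
      exact S.uoc_mono hm.le (IH m hm j hxm)

lemma cc_subset_skeleton {n N : ℕ} (h : n ≤ N) (i : S.cell n) :
    S.cc n i ⊆ S.skeleton N := fun x hx =>
  Set.mem_iUnion.2 ⟨n, Set.mem_iUnion.2 ⟨h, Set.mem_iUnion.2 ⟨i, hx⟩⟩⟩

lemma skeleton_eq_uoc (N : ℕ) : S.skeleton N = S.uoc N := by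
  apply Set.Subset.antisymm
  · intro x hx
    simp only [skeleton, Set.mem_iUnion] at hx
    obtain ⟨m, hm, j, hxm⟩ := hx
    exact S.uoc_mono hm (S.cc_subset_uoc m j hxm)
  · intro x hx
    rw [mem_uoc_iff] at hx
    obtain ⟨p, hp, hxp⟩ := hx
    exact S.cc_subset_skeleton hp p.2 (S.oc_subset_cc _ _ hxp)

lemma isClosed_of_subset_skeleton {N : ℕ} {D : Set X} (hD : D ⊆ S.skeleton N)
    (hcl : ∀ n, n ≤ N → ∀ i : S.cell n, IsClosed (D ∩ S.cc n i)) : IsClosed D := by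
  have key : ∀ n (i : S.cell n), IsClosed (D ∩ S.cc n i) := by
    intro n
    induction n using Nat.strong_induction_on with
    | _ n IH =>
      intro i
      rcases le_or_gt n N with hn | hn
      · exact hcl n hn i
      · have hDoc : ∀ x, x ∈ D → x ∉ S.oc n i := by
          intro x hxD hxo
          have hxu : x ∈ S.uoc N := (S.skeleton_eq_uoc N) ▸ hD hxD
          rw [mem_uoc_iff] at hxu
          obtain ⟨p, hpN, hpo⟩ := hxu
          have hps := S.cell_eq_of_mem_oc hpo hxo
          have : p.1 = n := congrArg Sigma.fst hps
          omega
        have hFfin : {p : Σ m, S.cell m |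
            (S.oc p.1 p.2 ∩ S.cc n i).Nonempty ∧ p.1 < n}.Finite :=
          (S.closureFinite n i).subset (fun p hp => hp.1)
        have hkey : D ∩ S.cc n i =
            ⋃ p ∈ {p : Σ m, S.cell m | (S.oc p.1 p.2 ∩ S.cc n i).Nonempty ∧ p.1 < n},
              (D ∩ S.cc p.1 p.2) ∩ S.msph n i := by
          apply Set.Subset.antisymm
          · rintro x ⟨hxD, hxcc⟩
            have hxm : x ∈ S.msph n i := by
              rw [S.cc_eq_oc_union_msph] at hxcc
              rcases hxcc with hh | hh
              · exact absurd hh (hDoc x hxD)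
              · exact hh
            have hbelow := S.msph_subset_below n i hxm
            simp only [Set.mem_iUnion] at hbelow
            obtain ⟨m', hm', j', hccm⟩ := hbelow
            have hxu : x ∈ S.uoc m' := S.cc_subset_uoc m' j' hccm
            rw [mem_uoc_iff] at hxu
            obtain ⟨p, hpm, hpo⟩ := hxu
            refine Set.mem_biUnion ?_ ⟨⟨hxD, S.oc_subset_cc _ _ hpo⟩, hxm⟩
            exact ⟨⟨x, hpo, S.msph_subset_cc n i hxm⟩, lt_of_le_of_lt hpm hm'⟩
          · intro x hx
            simp only [Set.mem_iUnion, Set.mem_setOf_eq] at hx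
            obtain ⟨p, hp, ⟨hxD, _⟩, hxm⟩ := hx
            exact ⟨hxD, S.msph_subset_cc n i hxm⟩
        rw [hkey]
        exact hFfin.isClosed_biUnion
          (fun p hp => (IH p.1 hp.2 p.2).inter (S.isClosed_msph n i))
  exact S.weakTopology D (fun n i => key n i)

lemma isClosed_skeleton (N : ℕ) : IsClosed (S.skeleton N) := by
  apply S.isClosed_of_subset_skeleton (Set.Subset.rfl)
  intro n hn i
  rw [Set.inter_eq_right.2 (S.cc_subset_skeleton hn i)]
  exact S.isClosed_cc n i

lemma continuousOn_skeleton_of_cells {N : ℕ} {f : X → ℝ}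
    (hf : ∀ n, n ≤ N → ∀ i : S.cell n, ContinuousOn (f ∘ S.map n i) (closedBall 0 1)) :
    ContinuousOn f (S.skeleton N) := by
  rw [continuousOn_iff_isClosed]
  intro t ht
  refine ⟨S.skeleton N ∩ f ⁻¹' t, ?_, ?_⟩
  · apply S.isClosed_of_subset_skeleton Set.inter_subset_left
    intro n hn i
    have heq : (S.skeleton N ∩ f ⁻¹' t) ∩ S.cc n i =
        S.map n i '' (closedBall 0 1 ∩ (f ∘ S.map n i) ⁻¹' t) := by
      apply Set.Subset.antisymm
      · rintro x ⟨⟨-, hxt⟩, y, hy, rfl⟩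
        exact ⟨y, ⟨hy, hxt⟩, rfl⟩
      · rintro x ⟨y, ⟨hy, hyt⟩, rfl⟩
        exact ⟨⟨S.cc_subset_skeleton hn i (Set.mem_image_of_mem _ hy), hyt⟩,
          Set.mem_image_of_mem _ hy⟩
    rw [heq]
    have hcl : IsClosed (closedBall (0 : EuclideanSpace ℝ (Fin n)) 1 ∩ (f ∘ S.map n i) ⁻¹' t) :=
      (hf n hn i).preimage_isClosed_of_isClosed Metric.isClosed_closedBall ht
    have hcp : IsCompact (closedBall (0 : EuclideanSpace ℝ (Fin n)) 1 ∩ (f ∘ S.map n i) ⁻¹' t) :=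
      (isCompact_closedBall _ _).of_isClosed_subset hcl Set.inter_subset_left
    exact (hcp.image_of_continuousOn ((S.continuousOn n i).mono Set.inter_subset_left)).isClosed
  · rw [Set.inter_comm (S.skeleton N), Set.inter_assoc, Set.inter_self]

lemma mapsTo_sphere_skeleton (n : ℕ) (i : S.cell (n + 1)) :
    Set.MapsTo (S.map (n + 1) i) (sphere 0 1) (S.skeleton n) := by
  intro y hy
  have hx := S.mapsTo_boundary (n + 1) i hy
  simp only [Set.mem_iUnion] at hx
  obtain ⟨m, hm, j, hxm⟩ := hx
  exact S.cc_subset_skeleton (Nat.lt_succ_iff.1 hm) j hxm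

lemma skeleton_eq_univ {d : ℕ} (hdim : S.DimLE d) : S.skeleton d = Set.univ := by
  ext x
  simp only [Set.mem_univ, iff_true]
  obtain ⟨p, hp, -⟩ := S.partition x
  have hpm : p.1 ≤ d := by
    by_contra hlt
    exact (hdim p.1 (by omega)).false p.2
  exact S.cc_subset_skeleton hpm p.2 (S.oc_subset_cc _ _ hp)

theorem exists_separating {d : ℕ} (hdim : S.DimLE d) {A B : Set X}
    (hA : IsClosed A) (hB : IsClosed B) (hAB : Disjoint A B) :
    ∃ f : X → ℝ, Continuous f ∧ Set.EqOn f 0 A ∧ Set.EqOn f 1 B := by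
  classical
  have main : ∀ n : ℕ, ∃ f : X → ℝ,
      ContinuousOn f (S.skeleton n) ∧ Set.EqOn f 0 A ∧ Set.EqOn f 1 B := by
    intro n
    induction n with
    | zero =>
      refine ⟨fun x => if x ∈ B then 1 else 0, ?_, ?_, ?_⟩
      · apply S.continuousOn_skeleton_of_cells
        intro n hn i
        interval_cases n
        have : Subsingleton (EuclideanSpace ℝ (Fin 0)) :=
          (WithLp.equiv 2 (∀ _ : Fin 0, ℝ)).subsingleton
        exact continuous_of_discreteTopology.continuousOn
      · intro x hx
        simp only [Pi.zero_apply]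
        rw [if_neg (Set.disjoint_left.1 hAB hx)]
      · intro x hx
        simp only [Pi.one_apply]
        rw [if_pos hx]
    | succ n IHn =>
      obtain ⟨f, hfc, hfA, hfB⟩ := IHn
      have hgex : ∀ i : S.cell (n + 1), ∃ g : C(EuclideanSpace ℝ (Fin (n + 1)), ℝ),
          ∀ y ∈ (sphere (0 : EuclideanSpace ℝ (Fin (n + 1))) 1
              ∪ (closedBall 0 1 ∩ S.map (n + 1) i ⁻¹' A))
              ∪ (closedBall 0 1 ∩ S.map (n + 1) i ⁻¹' B),
            g y = f (S.map (n + 1) i y) := by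
        intro i
        set P1 : Set (EuclideanSpace ℝ (Fin (n + 1))) :=
          closedBall 0 1 ∩ S.map (n + 1) i ⁻¹' A with hP1
        set P2 : Set (EuclideanSpace ℝ (Fin (n + 1))) :=
          closedBall 0 1 ∩ S.map (n + 1) i ⁻¹' B with hP2
        set Sp : Set (EuclideanSpace ℝ (Fin (n + 1))) := sphere 0 1 with hSp
        have hP1c : IsClosed P1 :=
          (S.continuousOn (n + 1) i).preimage_isClosed_of_isClosed Metric.isClosed_closedBall hA
        have hP2c : IsClosed P2 :=
          (S.continuousOn (n + 1) i).preimage_isClosed_of_isClosed Metric.isClosed_closedBall hB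
        have hSpc : IsClosed Sp := isClosed_sphere
        have hconSp : ContinuousOn (f ∘ S.map (n + 1) i) Sp :=
          hfc.comp ((S.continuousOn (n + 1) i).mono sphere_subset_closedBall)
            (S.mapsTo_sphere_skeleton n i)
        have hconP1 : ContinuousOn (f ∘ S.map (n + 1) i) P1 := by
          apply continuousOn_const (c := (0 : ℝ)).congr
          intro y hy
          exact hfA hy.2
        have hconP2 : ContinuousOn (f ∘ S.map (n + 1) i) P2 := by
          apply continuousOn_const (c := (1 : ℝ)).congr
          intro y hy
          exact hfB hy.2
        have hEc : IsClosed ((Sp ∪ P1) ∪ P2) := ((hSpc.union hP1c).union hP2c)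
        have hEcont : ContinuousOn (f ∘ S.map (n + 1) i) ((Sp ∪ P1) ∪ P2) :=
          continuousOn_union_of_isClosed (hSpc.union hP1c) hP2c
            (continuousOn_union_of_isClosed hSpc hP1c hconSp hconP1) hconP2
        obtain ⟨g, hg⟩ := ContinuousMap.exists_restrict_eq
          (X := EuclideanSpace ℝ (Fin (n + 1))) hEc
          ⟨((Sp ∪ P1) ∪ P2).restrict (f ∘ S.map (n + 1) i), hEcont.restrict⟩
        refine ⟨g, fun y hy => ?_⟩
        have := congrFun (congrArg DFunLike.coe hg) ⟨y, hy⟩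
        exact this
      choose g hg using hgex
      set F : X → ℝ := fun x =>
        if hx : ∃ iy : Σ _i : S.cell (n + 1), EuclideanSpace ℝ (Fin (n + 1)),
            iy.2 ∈ ball (0 : EuclideanSpace ℝ (Fin (n + 1))) 1 ∧ S.map (n + 1) iy.1 iy.2 = x
        then g hx.choose.1 hx.choose.2 else f x with hFdef
      have hF_oc : ∀ (i : S.cell (n + 1)) (y : EuclideanSpace ℝ (Fin (n + 1))),
          y ∈ ball (0 : EuclideanSpace ℝ (Fin (n + 1))) 1 → F (S.map (n + 1) i y) = g i y := by
        intro i y hy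
        have hex : ∃ iy : Σ _i : S.cell (n + 1), EuclideanSpace ℝ (Fin (n + 1)),
            iy.2 ∈ ball (0 : EuclideanSpace ℝ (Fin (n + 1))) 1
              ∧ S.map (n + 1) iy.1 iy.2 = S.map (n + 1) i y := ⟨⟨i, y⟩, hy, rfl⟩
        rw [hFdef]
        simp only
        rw [dif_pos hex]
        obtain ⟨hb, hmap⟩ := hex.choose_spec
        obtain ⟨hi, hyy⟩ := S.eq_cell_point hb hy hmap
        have hc : hex.choose = (⟨i, y⟩ : Σ _i : S.cell (n + 1), EuclideanSpace ℝ (Fin (n + 1))) :=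
          Sigma.ext hi (heq_of_eq hyy)
        rw [hc]
      have hF_skel : ∀ x ∈ S.skeleton n, F x = f x := by
        intro x hx
        rw [hFdef]
        simp only
        rw [dif_neg]
        rintro ⟨⟨i, y⟩, hy, hmap⟩
        have hxu : x ∈ S.uoc n := (S.skeleton_eq_uoc n) ▸ hx
        rw [mem_uoc_iff] at hxu
        obtain ⟨p, hpn, hpo⟩ := hxu
        have hps := S.cell_eq_of_mem_oc hpo ⟨y, hy, hmap⟩
        have : p.1 = n + 1 := congrArg Sigma.fst hps
        omega
      have hFA : Set.EqOn F 0 A := by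
        intro x hxA
        simp only [Pi.zero_apply]
        rw [hFdef]
        simp only
        split_ifs with hx
        · obtain ⟨hb, hmap⟩ := hx.choose_spec
          rw [hg hx.choose.1 hx.choose.2
            (Or.inl (Or.inr ⟨ball_subset_closedBall hb, by rw [Set.mem_preimage, hmap]; exact hxA⟩)),
            hmap]
          exact hfA hxA
        · exact hfA hxA
      have hFB : Set.EqOn F 1 B := by
        intro x hxB
        simp only [Pi.one_apply]
        rw [hFdef]
        simp only
        split_ifs with hx
        · obtain ⟨hb, hmap⟩ := hx.choose_spec
          rw [hg hx.choose.1 hx.choose.2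
            (Or.inr ⟨ball_subset_closedBall hb, by rw [Set.mem_preimage, hmap]; exact hxB⟩),
            hmap]
          exact hfB hxB
        · exact hfB hxB
      refine ⟨F, ?_, hFA, hFB⟩
      apply S.continuousOn_skeleton_of_cells
      intro kk hkk i
      rcases Nat.lt_succ_iff_lt_or_eq.mp (Nat.lt_succ_of_le hkk) with hlt | rfl
      · have hkn : kk ≤ n := Nat.lt_succ_iff.1 hlt
        have himg : ∀ y ∈ closedBall (0 : EuclideanSpace ℝ (Fin kk)) 1,
            S.map kk i y ∈ S.skeleton n :=
          fun y hy => S.cc_subset_skeleton hkn i (Set.mem_image_of_mem _ hy)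
        have hcont : ContinuousOn (f ∘ S.map kk i) (closedBall 0 1) :=
          hfc.comp (S.continuousOn kk i) (fun y hy => himg y hy)
        apply hcont.congr
        intro y hy
        simp only [Function.comp_apply]
        rw [hF_skel _ (himg y hy)]
      · apply (g i).continuous.continuousOn.congr
        intro y hy
        rw [← ball_union_sphere] at hy
        rcases hy with hy | hy
        · exact hF_oc i y hy
        · have hxsk : S.map (n + 1) i y ∈ S.skeleton n := S.mapsTo_sphere_skeleton n i hy
          simp only [Function.comp_apply]
          rw [hF_skel _ hxsk, ← hg i y (Or.inl (Or.inl hy))]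
  obtain ⟨f, hfc, hfA, hfB⟩ := main d
  refine ⟨f, ?_, hfA, hfB⟩
  rw [← continuousOn_univ, ← S.skeleton_eq_univ hdim]
  exact hfc

theorem normalSpace_of_dimLE {d : ℕ} (hdim : S.DimLE d) : NormalSpace X := by
  refine ⟨fun A B hA hB hAB => ?_⟩
  obtain ⟨f, hfc, hfA, hfB⟩ := S.exists_separating hdim hA hB hAB
  refine ⟨f ⁻¹' Iio (1 / 2), f ⁻¹' Ioi (1 / 2),
    isOpen_Iio.preimage hfc, isOpen_Ioi.preimage hfc, ?_, ?_, ?_⟩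
  · intro x hx
    have : f x = 0 := hfA hx
    simp only [Set.mem_preimage, mem_Iio, this]
    norm_num
  · intro x hx
    have : f x = 1 := hfB hx
    simp only [Set.mem_preimage, mem_Ioi, this]
    norm_num
  · rw [Set.disjoint_left]
    intro x hx hx'
    simp only [Set.mem_preimage, mem_Iio, mem_Ioi] at hx hx'
    linarith

end CWStructure

end AuxCW

section AuxSection

/-- From a `τ`-equivariant map to `Sⱼ` one gets a categorical open cover of `X/τ`
by `j + 1` sets, each admitting a local section of the quotient map. -/
lemma exists_cover_of_equivariant {M : Type*} [TopologicalSpace M]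
    {τ : M → M} (hτc : Continuous τ) (hτinv : Function.Involutive τ) {j : ℕ}
    (g : M → Sph j) (hgc : Continuous g) (hge : ∀ x, g (τ x) = antipodal j (g x)) :
    ∃ U : Fin (j + 1) → Set (InvolQuot τ),
      (∀ i, IsOpen (U i)) ∧ (⋃ i, U i) = Set.univ ∧
        ∀ i, IsLocalSection (involQuotMk τ) (U i) := by
  classical
  have hcoord : ∀ i : Fin (j + 1),
      Continuous fun x : M => ((g x : EuclideanSpace ℝ (Fin (j + 1))) i) := fun i =>
    (EuclideanSpace.proj i).continuous.comp (continuous_subtype_val.comp hgc)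
  set W : Fin (j + 1) → Set M :=
    fun i => {x : M | 0 < ((g x : EuclideanSpace ℝ (Fin (j + 1))) i)} with hWdef
  have hWo : ∀ i, IsOpen (W i) := fun i => isOpen_lt continuous_const (hcoord i)
  have hneg : ∀ (x : M) (i : Fin (j + 1)),
      ((g (τ x) : EuclideanSpace ℝ (Fin (j + 1))) i)
        = -((g x : EuclideanSpace ℝ (Fin (j + 1))) i) := by
    intro x i
    rw [hge x]
    show ((↑(-(g x)) : EuclideanSpace ℝ (Fin (j + 1))) i) = _
    rw [coe_neg_sphere]
    rfl
  refine ⟨fun i => involQuotMk τ '' W i,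
    fun i => isOpenMap_involQuotMk hτc hτinv _ (hWo i), ?_, ?_⟩
  · ext u
    simp only [Set.mem_iUnion, Set.mem_univ, iff_true]
    obtain ⟨x, rfl⟩ := Quot.exists_rep u
    have hgx : ∃ i : Fin (j + 1), ((g x : EuclideanSpace ℝ (Fin (j + 1))) i) ≠ 0 := by
      by_contra hc
      push_neg at hc
      have : (g x : EuclideanSpace ℝ (Fin (j + 1))) = 0 := by
        apply PiLp.ext
        intro i
        exact hc i
      have hn := (g x).2
      rw [mem_sphere_zero_iff_norm, this, norm_zero] at hn
      norm_num at hn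
    obtain ⟨i, hi⟩ := hgx
    rcases lt_or_gt_of_ne hi with hlt | hgt
    · refine ⟨i, τ x, ?_, involQuotMk_tau x⟩
      show 0 < ((g (τ x) : EuclideanSpace ℝ (Fin (j + 1))) i)
      rw [hneg x i]
      linarith
    · exact ⟨i, x, hgt, rfl⟩
  · intro i
    -- the restricted quotient map is a homeomorphism `W i ≃ₜ q '' W i`
    have hinj : ∀ x ∈ W i, ∀ y ∈ W i, involQuotMk τ x = involQuotMk τ y → x = y := by
      intro x hx y hy hxy
      rcases (involQuot_mk_eq_iff hτinv).1 hxy with rfl | hyx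
      · rfl
      · exfalso
        have h1 : 0 < ((g y : EuclideanSpace ℝ (Fin (j + 1))) i) := hy
        rw [hyx, hneg x i] at h1
        have h2 : 0 < ((g x : EuclideanSpace ℝ (Fin (j + 1))) i) := hx
        linarith
    set e : W i ≃ (involQuotMk τ '' W i : Set (InvolQuot τ)) :=
      Equiv.ofBijective (fun z => ⟨involQuotMk τ z.1, Set.mem_image_of_mem _ z.2⟩)
        (by
          constructor
          · rintro ⟨x, hx⟩ ⟨y, hy⟩ hxy
            have : involQuotMk τ x = involQuotMk τ y := congrArg Subtype.val hxy
            exact Subtype.ext (hinj x hx y hy this)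
          · rintro ⟨u, x, hx, rfl⟩
            exact ⟨⟨x, hx⟩, rfl⟩) with hedef
    have hec : Continuous e := by
      apply Continuous.subtype_mk
      exact continuous_quot_mk.comp continuous_subtype_val
    have heo : IsOpenMap e := by
      intro O hO
      obtain ⟨O', hO', rfl⟩ := isOpen_induced_iff.mp hO
      have himg : e '' (Subtype.val ⁻¹' O')
          = Subtype.val ⁻¹' (involQuotMk τ '' (O' ∩ W i)) := by
        ext ⟨u, hu⟩
        simp only [Set.mem_image, Set.mem_preimage]
        constructor
        · rintro ⟨⟨x, hx⟩, hxO, hxe⟩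
          refine ⟨x, ⟨hxO, hx⟩, ?_⟩
          have := congrArg Subtype.val hxe
          exact this
        · rintro ⟨x, ⟨hxO, hx⟩, hxu⟩
          exact ⟨⟨x, hx⟩, hxO, Subtype.ext hxu⟩
      rw [himg]
      exact (isOpenMap_involQuotMk hτc hτinv _ ((hO'.inter (hWo i)))).preimage
        continuous_subtype_val
    set he : W i ≃ₜ (involQuotMk τ '' W i : Set (InvolQuot τ)) :=
      e.toHomeomorphOfContinuousOpen hec heo with hhedef
    refine ⟨fun u => (he.symm u : M), continuous_subtype_val.comp he.symm.continuous, ?_⟩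
    intro u
    have : e (he.symm u) = u := he.apply_symm_apply u
    have := congrArg Subtype.val this
    exact this

end AuxSection

/-- for a connected `m`-dimensional CW complex `M` with free cellular
involution `τ`, if `secat (q : M → M/τ) = m` then the `ℤ/2`-index of `(M,τ)` is `m − 1`;
that is, `((M,τ);ℝⁿ)` satisfies the BUP for all `n < m`, but `((M,τ);ℝᵐ)` does not. -/
theorem stmt_18 (m : ℕ) {M : Type*} [TopologicalSpace M] [T2Space M] [ConnectedSpace M]
    (S : CWStructure M) (hdim : S.DimEq m)
    (τ : M → M) (hτc : Continuous τ) (hτinv : Function.Involutive τ)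
    (hτfree : ∀ x, τ x ≠ x) (hτcell : S.Cellular τ)
    (h : secat (involQuotMk τ) = (m : ℕ∞)) :
    z2Index τ = (m : ℕ∞) - 1 ∧
    (∀ n : ℕ, n < m → BorsukUlamProperty M τ (EuclideanSpace ℝ (Fin n))) ∧
    ¬ BorsukUlamProperty M τ (EuclideanSpace ℝ (Fin m)) := by
  classical
  have hMne : Nonempty M := inferInstance
  cases m with
  | zero =>
    exfalso
    obtain ⟨k0, hk0, U, hUo, hUcov, hUsec⟩ := enat_sInf_mem h
    obtain rfl : k0 = 0 := by exact_mod_cast hk0.symm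
    obtain ⟨x⟩ := hMne
    have hx : involQuotMk τ x ∈ ⋃ i, U i := by rw [hUcov]; exact Set.mem_univ _
    simp only [Set.mem_iUnion] at hx
    obtain ⟨i, -⟩ := hx
    exact i.elim0
  | succ k =>
    obtain ⟨k', hk', U, hUo, hUcov, hUsec⟩ := enat_sInf_mem h
    obtain rfl : k' = k + 1 := by exact_mod_cast hk'.symm
    choose s hscont hssec using hUsec
    haveI : NormalSpace M := S.normalSpace_of_dimLE hdim.1
    haveI : NormalSpace (InvolQuot τ) := normalSpace_involQuot hτc hτinv
    obtain ⟨V, hVcov, hVo, hVcl⟩ :=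
      exists_iUnion_eq_closure_subset hUo (fun x => Set.toFinite _) hUcov
    obtain ⟨W, hWcov, hWo, hWcl⟩ :=
      exists_iUnion_eq_closure_subset hVo (fun x => Set.toFinite _) hVcov
    have hφex : ∀ i : Fin (k + 1), ∃ φ : C(InvolQuot τ, ℝ),
        Set.EqOn φ 0 ((V i)ᶜ) ∧ Set.EqOn φ 1 (closure (W i)) ∧
          ∀ u, φ u ∈ Icc (0 : ℝ) 1 :=
      fun i => exists_continuous_zero_one_of_isClosed (hVo i).isClosed_compl
        isClosed_closure (Set.disjoint_left.2 fun x hx hx' => hx (hWcl i hx'))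
    choose φ hφ0 hφ1 hφmem using hφex
    -- the sign decomposition of `q ⁻¹' (U i)`
    set A : Fin (k + 1) → Set M := fun i =>
      {x : M | ∃ hx : involQuotMk τ x ∈ U i, s i ⟨involQuotMk τ x, hx⟩ = x} with hAdef
    set B : Fin (k + 1) → Set M := fun i =>
      {x : M | ∃ hx : involQuotMk τ x ∈ U i, s i ⟨involQuotMk τ x, hx⟩ = τ x} with hBdef
    have hfib : ∀ {a b : M}, involQuotMk τ a = involQuotMk τ b → b = a ∨ b = τ a :=
      fun hab => (involQuot_mk_eq_iff hτinv).1 hab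
    have hABcov : ∀ i x, involQuotMk τ x ∈ U i → (x ∈ A i ∨ x ∈ B i) := by
      intro i x hx
      have hsx := hssec i ⟨involQuotMk τ x, hx⟩
      rcases hfib hsx with h1 | h2
      · exact Or.inl ⟨hx, h1.symm⟩
      · refine Or.inr ⟨hx, ?_⟩
        have h3 := congrArg τ h2
        rw [hτinv] at h3
        exact h3.symm
    have hABdisj : ∀ i x, x ∈ A i → x ∈ B i → False := by
      rintro i x ⟨hx, hsx⟩ ⟨hx', hsx'⟩
      apply hτfree x
      rw [← hsx', hsx]
    have hAq : ∀ i x, x ∈ A i → involQuotMk τ x ∈ U i := by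
      rintro i x ⟨hx, -⟩; exact hx
    have hBq : ∀ i x, x ∈ B i → involQuotMk τ x ∈ U i := by
      rintro i x ⟨hx, -⟩; exact hx
    have hsubty : ∀ (i : Fin (k + 1)) (x : M) (hx : involQuotMk τ x ∈ U i)
        (hx' : involQuotMk τ (τ x) ∈ U i),
        s i ⟨involQuotMk τ (τ x), hx'⟩ = s i ⟨involQuotMk τ x, hx⟩ :=
      fun i x hx hx' => congrArg (s i) (Subtype.ext (involQuotMk_tau x))
    have hAtoB : ∀ i x, x ∈ A i → τ x ∈ B i := by
      rintro i x ⟨hx, hsx⟩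
      have hx' : involQuotMk τ (τ x) ∈ U i := by rwa [involQuotMk_tau]
      refine ⟨hx', ?_⟩
      rw [hsubty i x hx hx', hsx, hτinv]
    have hBtoA : ∀ i x, x ∈ B i → τ x ∈ A i := by
      rintro i x ⟨hx, hsx⟩
      have hx' : involQuotMk τ (τ x) ∈ U i := by rwa [involQuotMk_tau]
      refine ⟨hx', ?_⟩
      rw [hsubty i x hx hx', hsx]
    have hAo : ∀ i, IsOpen (A i) := by
      intro i
      have hopen : IsOpen {z : (involQuotMk τ ⁻¹' (U i) : Set M) |
          s i ⟨involQuotMk τ z.1, z.2⟩ ≠ τ z.1} := by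
        have hcZ : Continuous fun z : (involQuotMk τ ⁻¹' (U i) : Set M) =>
            s i ⟨involQuotMk τ z.1, z.2⟩ :=
          (hscont i).comp (Continuous.subtype_mk
            (continuous_quot_mk.comp continuous_subtype_val) _)
        have hcT : Continuous fun z : (involQuotMk τ ⁻¹' (U i) : Set M) => τ z.1 :=
          hτc.comp continuous_subtype_val
        exact isOpen_compl_iff.mpr (isClosed_eq hcZ hcT)
      have himg : A i = Subtype.val '' {z : (involQuotMk τ ⁻¹' (U i) : Set M) |
          s i ⟨involQuotMk τ z.1, z.2⟩ ≠ τ z.1} := by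
        ext x
        constructor
        · rintro ⟨hx, hsx⟩
          refine ⟨⟨x, hx⟩, ?_, rfl⟩
          show s i ⟨involQuotMk τ x, hx⟩ ≠ τ x
          rw [hsx]
          exact fun hc => hτfree x hc.symm
        · rintro ⟨⟨x', hx'⟩, hne, rfl⟩
          rcases hfib (hssec i ⟨involQuotMk τ x', hx'⟩) with h1 | h2
          · exact ⟨hx', h1.symm⟩
          · exfalso
            apply hne
            have h3 := congrArg τ h2
            rw [hτinv] at h3
            exact h3.symm
      rw [himg]
      exact ((hUo i).preimage continuous_quot_mk).isOpenMap_subtype_val _ hopen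
    have hBo : ∀ i, IsOpen (B i) := by
      intro i
      have hopen : IsOpen {z : (involQuotMk τ ⁻¹' (U i) : Set M) |
          s i ⟨involQuotMk τ z.1, z.2⟩ ≠ z.1} := by
        have hcZ : Continuous fun z : (involQuotMk τ ⁻¹' (U i) : Set M) =>
            s i ⟨involQuotMk τ z.1, z.2⟩ :=
          (hscont i).comp (Continuous.subtype_mk
            (continuous_quot_mk.comp continuous_subtype_val) _)
        exact isOpen_compl_iff.mpr (isClosed_eq hcZ continuous_subtype_val)
      have himg : B i = Subtype.val '' {z : (involQuotMk τ ⁻¹' (U i) : Set M) |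
          s i ⟨involQuotMk τ z.1, z.2⟩ ≠ z.1} := by
        ext x
        constructor
        · rintro ⟨hx, hsx⟩
          refine ⟨⟨x, hx⟩, ?_, rfl⟩
          show s i ⟨involQuotMk τ x, hx⟩ ≠ x
          rw [hsx]
          exact hτfree x
        · rintro ⟨⟨x', hx'⟩, hne, rfl⟩
          rcases hfib (hssec i ⟨involQuotMk τ x', hx'⟩) with h1 | h2
          · exact absurd h1.symm hne
          · refine ⟨hx', ?_⟩
            have h3 := congrArg τ h2
            rw [hτinv] at h3
            exact h3.symm
      rw [himg]
      exact ((hUo i).preimage continuous_quot_mk).isOpenMap_subtype_val _ hopen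
    -- the equivariant coordinate functions
    set ψ : Fin (k + 1) → M → ℝ := fun i x =>
      if x ∈ A i then φ i (involQuotMk τ x)
      else if x ∈ B i then -φ i (involQuotMk τ x) else 0 with hψdef
    have hψA : ∀ i x, x ∈ A i → ψ i x = φ i (involQuotMk τ x) :=
      fun i x hx => if_pos hx
    have hψB : ∀ i x, x ∈ B i → ψ i x = -φ i (involQuotMk τ x) := by
      intro i x hx
      have hxA : x ∉ A i := fun hA => hABdisj i x hA hx
      show (if x ∈ A i then _ else _) = _
      rw [if_neg hxA, if_pos hx]
    have hψ0 : ∀ i x, involQuotMk τ x ∉ U i → ψ i x = 0 := by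
      intro i x hx
      have hxA : x ∉ A i := fun hA => hx (hAq i x hA)
      have hxB : x ∉ B i := fun hB => hx (hBq i x hB)
      show (if x ∈ A i then _ else _) = _
      rw [if_neg hxA, if_neg hxB]
    have hψc : ∀ i, Continuous (ψ i) := by
      intro i
      rw [continuous_iff_continuousAt]
      intro x
      by_cases hxA : x ∈ A i
      · refine (((φ i).continuous.comp continuous_quot_mk).continuousAt).congr ?_
        filter_upwards [(hAo i).mem_nhds hxA] with y hy
        exact (hψA i y hy).symm
      · by_cases hxB : x ∈ B i
        · refine ((((φ i).continuous.comp continuous_quot_mk).neg).continuousAt).congr ?_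
          filter_upwards [(hBo i).mem_nhds hxB] with y hy
          exact (hψB i y hy).symm
        · have hxU : involQuotMk τ x ∉ U i := by
            intro hU
            rcases hABcov i x hU with hA | hB
            exacts [hxA hA, hxB hB]
          have hxO : x ∈ involQuotMk τ ⁻¹' ((closure (V i))ᶜ) := by
            intro hc
            exact hxU (hVcl i hc)
          refine ContinuousAt.congr (f := fun _ : M => (0 : ℝ)) continuousAt_const ?_
          filter_upwards [(isClosed_closure.isOpen_compl.preimage
            continuous_quot_mk).mem_nhds hxO] with y hy
          have hyV : involQuotMk τ y ∈ (V i)ᶜ := fun hyV => hy (subset_closure hyV)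
          have hφy : φ i (involQuotMk τ y) = 0 := hφ0 i hyV
          refine Eq.symm ?_
          show ψ i y = 0
          by_cases hyA : y ∈ A i
          · rw [hψA i y hyA, hφy]
          · by_cases hyB : y ∈ B i
            · rw [hψB i y hyB, hφy, neg_zero]
            · show (if y ∈ A i then _ else _) = _
              rw [if_neg hyA, if_neg hyB]
    have hψτ : ∀ i x, ψ i (τ x) = -ψ i x := by
      intro i x
      by_cases hxA : x ∈ A i
      · rw [hψB i (τ x) (hAtoB i x hxA), involQuotMk_tau, hψA i x hxA]
      · by_cases hxB : x ∈ B i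
        · rw [hψA i (τ x) (hBtoA i x hxB), involQuotMk_tau, hψB i x hxB, neg_neg]
        · have hxU : involQuotMk τ x ∉ U i := by
            intro hU
            rcases hABcov i x hU with hA | hB
            exacts [hxA hA, hxB hB]
          have hxU' : involQuotMk τ (τ x) ∉ U i := by rwa [involQuotMk_tau]
          rw [hψ0 i (τ x) hxU', hψ0 i x hxU, neg_zero]
    have hψne : ∀ x, ∃ i, ψ i x ≠ 0 := by
      intro x
      have hx : involQuotMk τ x ∈ ⋃ i, W i := by rw [hWcov]; exact Set.mem_univ _
      simp only [Set.mem_iUnion] at hx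
      obtain ⟨i, hxW⟩ := hx
      have hφ1' : φ i (involQuotMk τ x) = 1 := hφ1 i (subset_closure hxW)
      have hxU : involQuotMk τ x ∈ U i := hVcl i (subset_closure (hWcl i (subset_closure hxW)))
      refine ⟨i, ?_⟩
      rcases hABcov i x hxU with hA | hB
      · rw [hψA i x hA, hφ1']; norm_num
      · rw [hψB i x hB, hφ1']; norm_num
    -- the equivariant map to the sphere
    set Φ : M → EuclideanSpace ℝ (Fin (k + 1)) :=
      fun x => (EuclideanSpace.equiv (Fin (k + 1)) ℝ).symm (fun i => ψ i x) with hΦdef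
    have hΦc : Continuous Φ :=
      (EuclideanSpace.equiv (Fin (k + 1)) ℝ).symm.continuous.comp
        (continuous_pi (fun i => hψc i))
    have hΦcoord : ∀ x i, Φ x i = ψ i x := fun x i => rfl
    have hΦne : ∀ x, Φ x ≠ 0 := by
      intro x h0
      obtain ⟨i, hi⟩ := hψne x
      apply hi
      rw [← hΦcoord x i, h0]
      rfl
    have hΦτ : ∀ x, Φ (τ x) = -Φ x := by
      intro x
      apply PiLp.ext
      intro i
      rw [PiLp.neg_apply, hΦcoord, hΦcoord]
      exact hψτ i x
    have hnorm : ∀ x, ‖Φ x‖ ≠ 0 := fun x => norm_ne_zero_iff.2 (hΦne x)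
    set g : M → Sph k := fun x => ⟨‖Φ x‖⁻¹ • Φ x, by
      rw [mem_sphere_zero_iff_norm, norm_smul, norm_inv, norm_norm,
        inv_mul_cancel₀ (hnorm x)]⟩ with hgdef
    have hgc : Continuous g :=
      Continuous.subtype_mk ((hΦc.norm.inv₀ hnorm).smul hΦc) _
    have hge : ∀ x, g (τ x) = antipodal k (g x) := by
      intro x
      apply Subtype.ext
      show ‖Φ (τ x)‖⁻¹ • Φ (τ x) = ((-(g x) : Sph k) : EuclideanSpace ℝ (Fin (k + 1)))
      rw [coe_neg_sphere]
      show _ = -(‖Φ x‖⁻¹ • Φ x)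
      rw [hΦτ x, norm_neg, smul_neg]
    -- conclusions
    have hcast : ((k + 1 : ℕ) : ℕ∞) - 1 = (k : ℕ∞) := by
      rw [← Nat.cast_one (R := ℕ∞), ← ENat.coe_sub]
      norm_num
    refine ⟨?_, ?_, ?_⟩
    · have hup : z2Index τ ≤ (k : ℕ∞) := sInf_le ⟨k, rfl, g, hgc, hge⟩
      have hlow : (k : ℕ∞) ≤ z2Index τ := by
        apply le_sInf
        rintro b ⟨j, rfl, g', hg'c, hg'e⟩
        obtain ⟨U', hU'o, hU'cov, hU'sec⟩ :=
          exists_cover_of_equivariant hτc hτinv g' hg'c hg'e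
        have hle : secat (involQuotMk τ) ≤ ((j + 1 : ℕ) : ℕ∞) :=
          sInf_le ⟨j + 1, rfl, U', hU'o, hU'cov, hU'sec⟩
        rw [h] at hle
        have hkj : k + 1 ≤ j + 1 := by exact_mod_cast hle
        exact_mod_cast Nat.le_of_succ_le_succ hkj
      rw [hcast]
      exact le_antisymm hup hlow
    · intro n hn f hfcont
      cases n with
      | zero =>
        haveI : Subsingleton (EuclideanSpace ℝ (Fin 0)) :=
          (WithLp.equiv 2 (∀ _ : Fin 0, ℝ)).subsingleton
        obtain ⟨x⟩ := hMne
        exact ⟨x, Subsingleton.elim _ _⟩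
      | succ j =>
        by_contra hcon
        push_neg at hcon
        set d : M → EuclideanSpace ℝ (Fin (j + 1)) := fun x => f x - f (τ x) with hddef
        have hd : ∀ x, d x ≠ 0 := fun x => sub_ne_zero_of_ne (hcon x).symm
        have hdc : Continuous d := hfcont.sub (hfcont.comp hτc)
        have hdτ : ∀ x, d (τ x) = -d x := by
          intro x
          show f (τ x) - f (τ (τ x)) = -(f x - f (τ x))
          rw [hτinv x, neg_sub]
        have hdn : ∀ x, ‖d x‖ ≠ 0 := fun x => norm_ne_zero_iff.2 (hd x)
        set g' : M → Sph j := fun x => ⟨‖d x‖⁻¹ • d x, by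
          rw [mem_sphere_zero_iff_norm, norm_smul, norm_inv, norm_norm,
            inv_mul_cancel₀ (hdn x)]⟩ with hg'def
        have hg'c : Continuous g' :=
          Continuous.subtype_mk ((hdc.norm.inv₀ hdn).smul hdc) _
        have hg'e : ∀ x, g' (τ x) = antipodal j (g' x) := by
          intro x
          apply Subtype.ext
          show ‖d (τ x)‖⁻¹ • d (τ x) = ((-(g' x) : Sph j) : EuclideanSpace ℝ (Fin (j + 1)))
          rw [coe_neg_sphere]
          show _ = -(‖d x‖⁻¹ • d x)
          rw [hdτ x, norm_neg, smul_neg]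
        obtain ⟨U', hU'o, hU'cov, hU'sec⟩ :=
          exists_cover_of_equivariant hτc hτinv g' hg'c hg'e
        have hle : secat (involQuotMk τ) ≤ ((j + 1 : ℕ) : ℕ∞) :=
          sInf_le ⟨j + 1, rfl, U', hU'o, hU'cov, hU'sec⟩
        rw [h] at hle
        have hkj : k + 1 ≤ j + 1 := by exact_mod_cast hle
        omega
    · intro hbup
      obtain ⟨x, hx⟩ := hbup
        (fun x => ((g x : EuclideanSpace ℝ (Fin (k + 1)))))
        (continuous_subtype_val.comp hgc)
      rw [hge x] at hx
      have hx' : -((g x : EuclideanSpace ℝ (Fin (k + 1))))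
          = ((g x : EuclideanSpace ℝ (Fin (k + 1)))) := by
        rw [← coe_neg_sphere]
        exact hx
      have h2 : (2 : ℝ) • ((g x : EuclideanSpace ℝ (Fin (k + 1)))) = 0 := by
        rw [two_smul]
        nth_rewrite 1 [← hx']
        exact neg_add_cancel _
      have hzero : ((g x : EuclideanSpace ℝ (Fin (k + 1)))) = 0 := by
        rcases smul_eq_zero.mp h2 with h' | h'
        · norm_num at h'
        · exact h'
      have hgn := (g x).2
      rw [mem_sphere_zero_iff_norm, hzero, norm_zero] at hgn
      norm_num at hgn
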